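/- Let g : ℝ → ℝ be continuously differentiable, let G(x) = ∫₀ˣ g(τ) dτ, and let I be an open interval containing 0 on which G ≥ 0. Define u : I × ℝ → ℂ by u(x₁,x₂) = ∫₀^∞ e^{i x₂ ξ} e^{−G(x₁) ξ} (1 + ξ⁴)^{−1} dξ. Then u is continuous, the partial derivatives ∂²u/∂x₁², ∂²u/∂x₂², ∂u/∂x₂ exist and are continuous on I × ℝ, and u satisfies −∂²u/∂x₁² − g(x₁)² ∂²u/∂x₂² + i g'(x₁) ∂u/∂x₂ = 0 at every point of I × ℝ. -/

import Mathlib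

open MeasureTheory

open MeasureTheory Set Metric
noncomputable section
namespace Stmt13

/-- The kernel `e^{zξ}/(1+ξ⁴)`. -/
def Mk (z : ℂ) (ξ : ℝ) : ℂ := Complex.exp (z * ξ) / (1 + (ξ : ℂ) ^ 4)

lemma denom_cast (ξ : ℝ) : ((1 + ξ ^ 4 : ℝ) : ℂ) = 1 + (ξ : ℂ) ^ 4 := by push_cast; ring

lemma denom_ne (ξ : ℝ) : (1 : ℂ) + (ξ : ℂ) ^ 4 ≠ 0 := by
  rw [← denom_cast ξ]
  exact_mod_cast ne_of_gt (by positivity : (0:ℝ) < 1 + ξ ^ 4)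

lemma cont_Mk (z : ℂ) : Continuous fun ξ : ℝ => Mk z ξ := by
  unfold Mk
  exact (Complex.continuous_exp.comp (continuous_const.mul Complex.continuous_ofReal)).div
    (by continuity) denom_ne

lemma cont_Mkz (ξ : ℝ) : Continuous fun z : ℂ => Mk z ξ := by
  unfold Mk
  exact (Complex.continuous_exp.comp (continuous_id.mul continuous_const)).div
    continuous_const (fun _ => denom_ne ξ)

lemma cont_Mk2 : Continuous fun q : ℂ × ℝ => Mk q.1 q.2 := by
  unfold Mk
  exact (Complex.continuous_exp.comp
    (continuous_fst.mul (Complex.continuous_ofReal.comp continuous_snd))).div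
    (by continuity) fun q => denom_ne q.2

lemma norm_Mk {z : ℂ} (hz : z.re ≤ 0) {ξ : ℝ} (hξ : 0 ≤ ξ) : ‖Mk z ξ‖ ≤ 1 / (1 + ξ ^ 4) := by
  unfold Mk
  rw [norm_div]
  have h1 : ‖Complex.exp (z * ξ)‖ ≤ 1 := by
    rw [Complex.norm_exp]
    have : (z * (ξ:ℂ)).re = z.re * ξ := by simp [Complex.mul_re]
    rw [this]
    exact Real.exp_le_one_iff.2 (mul_nonpos_of_nonpos_of_nonneg hz hξ)
  have h2 : ‖(1 : ℂ) + (ξ:ℂ) ^ 4‖ = 1 + ξ ^ 4 := by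
    rw [← denom_cast ξ, Complex.norm_real, Real.norm_eq_abs, abs_of_pos (by positivity)]
  rw [h2]
  gcongr

lemma norm_mul_Mk {z c : ℂ} {r ξ : ℝ} (hz : z.re ≤ 0) (hξ : 0 ≤ ξ)
    (hc : ‖c‖ ≤ r * (1 + ξ ^ 2)) : ‖c * Mk z ξ‖ ≤ 2 * r / (1 + ξ ^ 2) := by
  have hr : 0 ≤ r := by nlinarith [norm_nonneg c, sq_nonneg ξ]
  calc ‖c * Mk z ξ‖ = ‖c‖ * ‖Mk z ξ‖ := norm_mul _ _
    _ ≤ (r * (1 + ξ ^ 2)) * (1 / (1 + ξ ^ 4)) :=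
        mul_le_mul hc (norm_Mk hz hξ) (norm_nonneg _) (by positivity)
    _ ≤ 2 * r / (1 + ξ ^ 2) := by
        rw [mul_one_div, div_le_div_iff₀ (by positivity) (by positivity)]
        nlinarith [sq_nonneg (ξ ^ 2 - 1), sq_nonneg ξ]

lemma bdd_int (r : ℝ) : Integrable (fun ξ => 2 * r / (1 + ξ ^ 2))
    (volume.restrict (Ioi (0:ℝ))) := by
  have h := (integrable_inv_one_add_sq.restrict (s := Ioi (0:ℝ))).const_mul (2 * r)
  simpa [div_eq_mul_inv] using h

lemma integrable_mul_Mk {z : ℂ} (hz : z.re ≤ 0) {c : ℝ → ℂ} {r : ℝ}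
    (hcont : Continuous c) (hb : ∀ ξ : ℝ, 0 ≤ ξ → ‖c ξ‖ ≤ r * (1 + ξ ^ 2)) :
    Integrable (fun ξ => c ξ * Mk z ξ) (volume.restrict (Ioi (0:ℝ))) := by
  refine Integrable.mono' (bdd_int r) ((hcont.mul (cont_Mk z)).aestronglyMeasurable) ?_
  refine (ae_restrict_iff' measurableSet_Ioi).2 (.of_forall fun ξ hξ => ?_)
  exact norm_mul_Mk hz (le_of_lt hξ) (hb ξ (le_of_lt hξ))

lemma hasDerivAt_Mk {φ : ℝ → ℂ} {φ' : ℂ} {s : ℝ} (hφ : HasDerivAt φ φ' s) (ξ : ℝ) :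
    HasDerivAt (fun t => Mk (φ t) ξ) (φ' * ξ * Mk (φ s) ξ) s := by
  have h := ((hφ.mul_const (ξ : ℂ)).cexp).div_const (1 + (ξ:ℂ) ^ 4)
  exact h.congr_deriv (by unfold Mk; ring)

/-- Master differentiation-under-the-integral lemma. -/
lemma master_deriv (P Q : ℝ → ℝ → ℂ) (z ζ : ℝ → ℂ) (s₀ : ℝ) (r : ℝ)
    (hPc : ∀ t, Continuous fun ξ => P t ξ) (hQc : Continuous fun ξ => Q s₀ ξ)
    (hev : ∀ᶠ t in nhds s₀, (z t).re ≤ 0 ∧ HasDerivAt z (ζ t) t ∧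
      (∀ ξ : ℝ, HasDerivAt (fun t' => P t' ξ) (Q t ξ) t) ∧
      (∀ ξ : ℝ, 0 ≤ ξ → ‖Q t ξ + ζ t * ξ * P t ξ‖ ≤ r * (1 + ξ ^ 2)))
    (hP0 : ∀ ξ : ℝ, 0 ≤ ξ → ‖P s₀ ξ‖ ≤ r * (1 + ξ ^ 2)) :
    HasDerivAt (fun t => ∫ ξ in Ioi (0:ℝ), P t ξ * Mk (z t) ξ)
      (∫ ξ in Ioi (0:ℝ), (Q s₀ ξ + ζ s₀ * ξ * P s₀ ξ) * Mk (z s₀) ξ) s₀ := by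
  obtain ⟨ε, hε, hball⟩ := Metric.eventually_nhds_iff_ball.1 hev
  have hz0 : (z s₀).re ≤ 0 := (hball s₀ (mem_ball_self hε)).1
  have key := hasDerivAt_integral_of_dominated_loc_of_deriv_le (μ := volume.restrict (Ioi (0:ℝ)))
    (F := fun t ξ => P t ξ * Mk (z t) ξ)
    (F' := fun t ξ => (Q t ξ + ζ t * ξ * P t ξ) * Mk (z t) ξ)
    (bound := fun ξ => 2 * r / (1 + ξ ^ 2)) (ball_mem_nhds s₀ hε)
    (.of_forall fun t => ((hPc t).mul (cont_Mk (z t))).aestronglyMeasurable)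
    (integrable_mul_Mk hz0 (hPc s₀) hP0)
    (((hQc.add ((continuous_const.mul Complex.continuous_ofReal).mul (hPc s₀))).mul
        (cont_Mk (z s₀))).aestronglyMeasurable)
    ?_ (bdd_int r) ?_
  · exact key.2
  · refine (ae_restrict_iff' measurableSet_Ioi).2 (.of_forall fun ξ hξ t ht => ?_)
    exact norm_mul_Mk (hball t ht).1 (le_of_lt hξ) ((hball t ht).2.2.2 ξ (le_of_lt hξ))
  · refine Filter.Eventually.of_forall fun ξ t ht => ?_
    have h1 := (hball t ht).2.2.1 ξ
    have h2 := hasDerivAt_Mk ((hball t ht).2.1) ξ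
    have h3 := h1.mul h2
    exact h3.congr_deriv (by ring)

/-- Master continuity lemma. -/
lemma master_cont (c : ℝ × ℝ → ℝ → ℂ) (z : ℝ × ℝ → ℂ) (p₀ : ℝ × ℝ) (r : ℝ)
    (hcξ : ∀ p, Continuous fun ξ => c p ξ)
    (hcp : ∀ ξ, ContinuousAt (fun p => c p ξ) p₀)
    (hzc : ContinuousAt z p₀)
    (hev : ∀ᶠ p in nhds p₀, (z p).re ≤ 0 ∧ ∀ ξ : ℝ, 0 ≤ ξ → ‖c p ξ‖ ≤ r * (1 + ξ ^ 2)) :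
    ContinuousAt (fun p => ∫ ξ in Ioi (0:ℝ), c p ξ * Mk (z p) ξ) p₀ := by
  refine continuousAt_of_dominated (F := fun p ξ => c p ξ * Mk (z p) ξ)
    (bound := fun ξ => 2 * r / (1 + ξ ^ 2))
    (.of_forall fun p => ((hcξ p).mul (cont_Mk (z p))).aestronglyMeasurable)
    ?_ (bdd_int r) ?_
  · refine hev.mono fun p hp => (ae_restrict_iff' measurableSet_Ioi).2
      (.of_forall fun ξ hξ => ?_)
    exact norm_mul_Mk hp.1 (le_of_lt hξ) (hp.2 ξ (le_of_lt hξ))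
  · refine Filter.Eventually.of_forall fun ξ => ?_
    have h1 : ContinuousAt (fun p : ℝ × ℝ => Mk (z p) ξ) p₀ :=
      ((cont_Mkz ξ).continuousAt).comp hzc
    exact (hcp ξ).mul h1



section defs

variable (g G : ℝ → ℝ)

def Af (x₁ x₂ : ℝ) : ℂ :=
  ∫ ξ in Ioi (0:ℝ), (Complex.I * ξ) * Mk (Complex.I * x₂ - G x₁) ξ

def Bf (x₁ x₂ : ℝ) : ℂ :=
  ∫ ξ in Ioi (0:ℝ), (-(ξ:ℂ) ^ 2) * Mk (Complex.I * x₂ - G x₁) ξ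

def Cf (x₁ x₂ : ℝ) : ℂ :=
  ∫ ξ in Ioi (0:ℝ), (-(g x₁ : ℂ) * ξ) * Mk (Complex.I * x₂ - G x₁) ξ

def Df (x₁ x₂ : ℝ) : ℂ :=
  ∫ ξ in Ioi (0:ℝ), ((g x₁ : ℂ) ^ 2 * ξ ^ 2 - ((deriv g x₁ : ℝ) : ℂ) * ξ) *
    Mk (Complex.I * x₂ - G x₁) ξ

end defs

lemma int_congr {f h : ℝ → ℂ} (e : ∀ ξ : ℝ, f ξ = h ξ) :
    ∫ ξ in Ioi (0:ℝ), f ξ = ∫ ξ in Ioi (0:ℝ), h ξ := by simp only [e]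

lemma re_le {w r : ℝ} (h : 0 ≤ r) : (Complex.I * w - (r : ℂ)).re ≤ 0 := by
  simp [Complex.sub_re, Complex.mul_re]
  linarith

section lems

variable {g G : ℝ → ℝ}

/-- ∂u/∂x₂. -/
lemma hasDerivAt_u2 (x₁ : ℝ) (h0 : 0 ≤ G x₁) (t : ℝ) :
    HasDerivAt (fun t' : ℝ => ∫ ξ in Ioi (0:ℝ), (1:ℂ) * Mk (Complex.I * t' - G x₁) ξ)
      (Af G x₁ t) t := by
  have h := master_deriv (fun _ _ => (1:ℂ)) (fun _ _ => 0)
    (fun t' : ℝ => Complex.I * t' - G x₁) (fun _ => Complex.I) t 1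
    (fun _ => continuous_const) continuous_const
    (Filter.Eventually.of_forall fun t' => ⟨re_le h0, by
        simpa using ((hasDerivAt_id t').ofReal_comp.const_mul Complex.I).sub_const (G x₁ : ℂ),
      fun ξ => hasDerivAt_const t' (1:ℂ), fun ξ hξ => by
        have e : (0:ℂ) + Complex.I * ξ * 1 = Complex.I * ξ := by ring
        rw [e, norm_mul, Complex.norm_I, one_mul, Complex.norm_real, Real.norm_eq_abs,
          abs_of_nonneg hξ]
        nlinarith⟩)
    (fun ξ hξ => by rw [norm_one]; nlinarith)
  have e2 : (∫ ξ in Ioi (0:ℝ), ((0:ℂ) + Complex.I * ξ * 1) * Mk (Complex.I * t - G x₁) ξ)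
      = Af G x₁ t := by
    unfold Af; exact int_congr fun ξ => by ring
  exact e2 ▸ h

/-- ∂²u/∂x₂². -/
lemma hasDerivAt_A2 (x₁ : ℝ) (h0 : 0 ≤ G x₁) (t : ℝ) :
    HasDerivAt (Af G x₁) (Bf G x₁ t) t := by
  have h := master_deriv (fun _ ξ => Complex.I * ξ) (fun _ _ => 0)
    (fun t' : ℝ => Complex.I * t' - G x₁) (fun _ => Complex.I) t 1
    (fun _ => continuous_const.mul Complex.continuous_ofReal) continuous_const
    (Filter.Eventually.of_forall fun t' => ⟨re_le h0, by
        simpa using ((hasDerivAt_id t').ofReal_comp.const_mul Complex.I).sub_const (G x₁ : ℂ),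
      fun ξ => hasDerivAt_const t' (Complex.I * ξ), fun ξ hξ => by
        have e : (0:ℂ) + Complex.I * ξ * (Complex.I * ξ) = ((-(ξ^2) : ℝ) : ℂ) := by
          push_cast; linear_combination (ξ:ℂ)^2 * Complex.I_mul_I
        rw [e, Complex.norm_real, Real.norm_eq_abs, abs_neg, abs_of_nonneg (by positivity)]
        nlinarith⟩)
    (fun ξ hξ => by
      rw [norm_mul, Complex.norm_I, one_mul, Complex.norm_real, Real.norm_eq_abs,
        abs_of_nonneg hξ]
      nlinarith)
  have e2 : (∫ ξ in Ioi (0:ℝ), ((0:ℂ) + Complex.I * ξ * (Complex.I * ξ)) *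
      Mk (Complex.I * t - G x₁) ξ) = Bf G x₁ t := by
    unfold Bf
    refine int_congr fun ξ => ?_
    have e : (0:ℂ) + Complex.I * ξ * (Complex.I * ξ) = -(ξ:ℂ)^2 := by
      linear_combination (ξ:ℂ)^2 * Complex.I_mul_I
    rw [e]
  exact e2 ▸ h

lemma abs_bdd_ev {f : ℝ → ℝ} (hf : Continuous f) (x₁ : ℝ) :
    ∀ᶠ s in nhds x₁, |f s| ≤ |f x₁| + 1 := by
  have h1 := Metric.tendsto_nhds.mp (hf.continuousAt (x := x₁)) 1 one_pos
  refine h1.mono fun s hs => ?_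
  rw [Real.dist_eq] at hs
  have h2 := abs_sub_abs_le_abs_sub (f s) (f x₁)
  linarith

lemma poly_bound' {A B c₁ c₂ ξ : ℝ} (hξ : 0 ≤ ξ) (hA : |A| ≤ c₁) (hB : |B| ≤ c₂) :
    |A^2*ξ^2 - B*ξ| ≤ (c₂ + c₁^2) * (1 + ξ^2) := by
  obtain ⟨hA1, hA2⟩ := abs_le.mp hA
  obtain ⟨hB1, hB2⟩ := abs_le.mp hB
  have hc₂ : 0 ≤ c₂ := le_trans (abs_nonneg B) hB
  have hA2' : A^2 ≤ c₁^2 := sq_le_sq' hA1 hA2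
  rw [abs_le]
  constructor
  · nlinarith [mul_nonneg (mul_nonneg (sq_nonneg A) hξ) hξ, sq_nonneg ξ,
      mul_nonneg hc₂ (sq_nonneg (ξ-1)), sq_nonneg (ξ-1)]
  · nlinarith [mul_nonneg (mul_nonneg (sq_nonneg A) hξ) hξ, sq_nonneg ξ,
      mul_nonneg hc₂ (sq_nonneg (ξ-1)), sq_nonneg (ξ-1),
      mul_le_mul_of_nonneg_right hA2' (mul_nonneg hξ hξ)]

/-- ∂u/∂x₁. -/
lemma hasDerivAt_u1 (hg : ContDiff ℝ 1 g) (hGd : ∀ x, HasDerivAt G (g x) x)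
    (x₁ x₂ : ℝ) (hnn : ∀ᶠ s in nhds x₁, 0 ≤ G s) :
    HasDerivAt (fun s : ℝ => ∫ ξ in Ioi (0:ℝ), (1:ℂ) * Mk (Complex.I * x₂ - G s) ξ)
      (Cf g G x₁ x₂) x₁ := by
  have hg_ev := abs_bdd_ev hg.continuous x₁
  have h := master_deriv (fun _ _ => (1:ℂ)) (fun _ _ => 0)
    (fun s : ℝ => Complex.I * x₂ - G s) (fun s => -((g s : ℝ) : ℂ)) x₁ (|g x₁| + 1)
    (fun _ => continuous_const) continuous_const
    ((hnn.and hg_ev).mono fun s hs => ⟨re_le hs.1,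
      ((hGd s).ofReal_comp).const_sub (Complex.I * x₂),
      fun ξ => hasDerivAt_const s (1:ℂ),
      fun ξ hξ => by
        have e : (0:ℂ) + -((g s : ℝ) : ℂ) * ξ * 1 = ((-(g s * ξ) : ℝ) : ℂ) := by
          push_cast; ring
        rw [e, Complex.norm_real, Real.norm_eq_abs, abs_neg, abs_mul, abs_of_nonneg hξ]
        nlinarith [hs.2, abs_nonneg (g s), abs_nonneg (g x₁), sq_nonneg (ξ-1),
          mul_nonneg (abs_nonneg (g s)) hξ]⟩)
    (fun ξ hξ => by rw [norm_one]; nlinarith [abs_nonneg (g x₁)])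
  have e2 : (∫ ξ in Ioi (0:ℝ), ((0:ℂ) + -((g x₁ : ℝ) : ℂ) * ξ * 1) *
      Mk (Complex.I * x₂ - G x₁) ξ) = Cf g G x₁ x₂ := by
    unfold Cf
    exact int_congr fun ξ => by ring
  exact e2 ▸ h

/-- ∂²u/∂x₁². -/
lemma hasDerivAt_C1 (hg : ContDiff ℝ 1 g) (hGd : ∀ x, HasDerivAt G (g x) x)
    (x₁ x₂ : ℝ) (hnn : ∀ᶠ s in nhds x₁, 0 ≤ G s) :
    HasDerivAt (fun s => Cf g G s x₂) (Df g G x₁ x₂) x₁ := by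
  have hg_ev := abs_bdd_ev hg.continuous x₁
  have hg'_ev := abs_bdd_ev (hg.continuous_deriv le_rfl) x₁
  set c₁ := |g x₁| + 1 with hc₁
  set c₂ := |deriv g x₁| + 1 with hc₂
  have h := master_deriv (fun s ξ => -((g s : ℝ) : ℂ) * ξ)
    (fun s ξ => -((deriv g s : ℝ) : ℂ) * ξ)
    (fun s : ℝ => Complex.I * x₂ - G s) (fun s => -((g s : ℝ) : ℂ)) x₁ (c₂ + c₁^2)
    (fun s => (continuous_const.mul Complex.continuous_ofReal))
    (continuous_const.mul Complex.continuous_ofReal)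
    (((hnn.and hg_ev).and hg'_ev).mono fun s hs => ⟨re_le hs.1.1,
      ((hGd s).ofReal_comp).const_sub (Complex.I * x₂),
      fun ξ => ((hg.differentiable one_ne_zero s).hasDerivAt.ofReal_comp).neg.mul_const (ξ:ℂ),
      fun ξ hξ => by
        have e : -((deriv g s : ℝ) : ℂ) * ξ + -((g s : ℝ) : ℂ) * ξ * (-((g s : ℝ) : ℂ) * ξ)
            = (((g s)^2 * ξ^2 - deriv g s * ξ : ℝ) : ℂ) := by push_cast; ring
        rw [e, Complex.norm_real, Real.norm_eq_abs]
        exact poly_bound' hξ hs.1.2 hs.2⟩)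
    (fun ξ hξ => by
      have e : -((g x₁ : ℝ) : ℂ) * ξ = ((-(g x₁ * ξ) : ℝ) : ℂ) := by push_cast; ring
      show ‖-((g x₁ : ℝ) : ℂ) * ξ‖ ≤ (c₂ + c₁^2) * (1 + ξ^2)
      rw [e, Complex.norm_real, Real.norm_eq_abs, abs_neg, abs_mul, abs_of_nonneg hξ, hc₁, hc₂]
      nlinarith [abs_nonneg (g x₁), abs_nonneg (deriv g x₁), sq_nonneg (ξ-1),
        mul_nonneg (abs_nonneg (g x₁)) hξ, sq_nonneg ξ,
        mul_nonneg (abs_nonneg (g x₁)) (sq_nonneg (ξ-1)), abs_nonneg (g x₁ * ξ)])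
  have e2 : (∫ ξ in Ioi (0:ℝ), (-((deriv g x₁ : ℝ) : ℂ) * ξ +
      -((g x₁ : ℝ) : ℂ) * ξ * (-((g x₁ : ℝ) : ℂ) * ξ)) * Mk (Complex.I * x₂ - G x₁) ξ)
      = Df g G x₁ x₂ := by
    unfold Df
    exact int_congr fun ξ => by ring
  exact e2 ▸ h

section cont

lemma zc (hGc : Continuous G) : Continuous fun p : ℝ × ℝ => Complex.I * p.2 - G p.1 :=
  (continuous_const.mul (Complex.continuous_ofReal.comp continuous_snd)).sub
    (Complex.continuous_ofReal.comp (hGc.comp continuous_fst))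

lemma contAt_u (hGc : Continuous G) (p₀ : ℝ × ℝ) (hnn : ∀ᶠ p in nhds p₀, 0 ≤ G p.1) :
    ContinuousAt (fun p : ℝ × ℝ =>
      ∫ ξ in Ioi (0:ℝ), (1:ℂ) * Mk (Complex.I * p.2 - G p.1) ξ) p₀ :=
  master_cont (fun _ _ => 1) (fun p => Complex.I * p.2 - G p.1) p₀ 1
    (fun _ => continuous_const) (fun _ => continuousAt_const) (zc hGc).continuousAt
    (hnn.mono fun p hp => ⟨re_le hp, fun ξ hξ => by rw [norm_one]; nlinarith⟩)

lemma contAt_A (hGc : Continuous G) (p₀ : ℝ × ℝ) (hnn : ∀ᶠ p in nhds p₀, 0 ≤ G p.1) :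
    ContinuousAt (fun p : ℝ × ℝ => Af G p.1 p.2) p₀ := by
  have h := master_cont (fun _ ξ => Complex.I * ξ) (fun p => Complex.I * p.2 - G p.1) p₀ 1
    (fun _ => continuous_const.mul Complex.continuous_ofReal) (fun _ => continuousAt_const)
    (zc hGc).continuousAt
    (hnn.mono fun p hp => ⟨re_le hp, fun ξ hξ => by
      rw [norm_mul, Complex.norm_I, one_mul, Complex.norm_real, Real.norm_eq_abs,
        abs_of_nonneg hξ]
      nlinarith⟩)
  exact h

lemma contAt_B (hGc : Continuous G) (p₀ : ℝ × ℝ) (hnn : ∀ᶠ p in nhds p₀, 0 ≤ G p.1) :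
    ContinuousAt (fun p : ℝ × ℝ => Bf G p.1 p.2) p₀ := by
  have h := master_cont (fun _ ξ => -(ξ:ℂ)^2) (fun p => Complex.I * p.2 - G p.1) p₀ 1
    (fun _ => (Complex.continuous_ofReal.pow 2).neg) (fun _ => continuousAt_const)
    (zc hGc).continuousAt
    (hnn.mono fun p hp => ⟨re_le hp, fun ξ hξ => by
      have e : -(ξ:ℂ)^2 = ((-(ξ^2) : ℝ) : ℂ) := by push_cast; ring
      show ‖-(ξ:ℂ)^2‖ ≤ 1 * (1 + ξ^2)
      rw [e, Complex.norm_real, Real.norm_eq_abs, abs_neg, abs_of_nonneg (by positivity)]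
      nlinarith⟩)
  exact h

lemma contAt_D (hg : ContDiff ℝ 1 g) (hGc : Continuous G) (p₀ : ℝ × ℝ)
    (hnn : ∀ᶠ p in nhds p₀, 0 ≤ G p.1) :
    ContinuousAt (fun p : ℝ × ℝ => Df g G p.1 p.2) p₀ := by
  have hg_ev : ∀ᶠ p : ℝ × ℝ in nhds p₀, |g p.1| ≤ |g p₀.1| + 1 :=
    (continuous_fst.tendsto p₀).eventually (abs_bdd_ev hg.continuous p₀.1)
  have hg'_ev : ∀ᶠ p : ℝ × ℝ in nhds p₀, |deriv g p.1| ≤ |deriv g p₀.1| + 1 :=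
    (continuous_fst.tendsto p₀).eventually (abs_bdd_ev (hg.continuous_deriv le_rfl) p₀.1)
  have h := master_cont
    (fun p ξ => ((g p.1 : ℝ) : ℂ)^2 * (ξ:ℂ)^2 - ((deriv g p.1 : ℝ) : ℂ) * ξ)
    (fun p => Complex.I * p.2 - G p.1) p₀ ((|deriv g p₀.1| + 1) + (|g p₀.1| + 1)^2)
    (fun p => ((continuous_const.mul (Complex.continuous_ofReal.pow 2))).sub
      (continuous_const.mul Complex.continuous_ofReal))
    (fun ξ => (((Complex.continuous_ofReal.comp (hg.continuous.comp continuous_fst)).pow 2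
        |>.mul continuous_const).sub
      ((Complex.continuous_ofReal.comp
        ((hg.continuous_deriv le_rfl).comp continuous_fst)).mul continuous_const)).continuousAt)
    (zc hGc).continuousAt
    (((hnn.and hg_ev).and hg'_ev).mono fun p hp => ⟨re_le hp.1.1, fun ξ hξ => by
      have e : ((g p.1 : ℝ) : ℂ)^2 * (ξ:ℂ)^2 - ((deriv g p.1 : ℝ) : ℂ) * ξ
          = (((g p.1)^2 * ξ^2 - deriv g p.1 * ξ : ℝ) : ℂ) := by push_cast; ring
      show ‖((g p.1 : ℝ) : ℂ)^2 * (ξ:ℂ)^2 - ((deriv g p.1 : ℝ) : ℂ) * ξ‖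
        ≤ ((|deriv g p₀.1| + 1) + (|g p₀.1| + 1)^2) * (1 + ξ^2)
      rw [e, Complex.norm_real, Real.norm_eq_abs]
      exact poly_bound' hξ hp.1.2 hp.2⟩)
  exact h

end cont

end lems

end Stmt13


open Stmt13 in
/-- Let `g : ℝ → ℝ` be continuously differentiable, let `G(x) = ∫₀ˣ g(τ) dτ`,
and let `I = (a,b)` be an open interval containing `0` on which `G ≥ 0`. Define
`u(x₁,x₂) = ∫₀^∞ e^{i x₂ ξ} e^{−G(x₁) ξ} (1 + ξ⁴)^{−1} dξ`. Then `u` is continuous, the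
partial derivatives `∂²u/∂x₁²`, `∂²u/∂x₂²`, `∂u/∂x₂` exist and are continuous on `I × ℝ`,
and `u` satisfies `−∂²u/∂x₁² − g(x₁)² ∂²u/∂x₂² + i g'(x₁) ∂u/∂x₂ = 0` on `I × ℝ`. -/
theorem stmt_13 (g : ℝ → ℝ) (hg : ContDiff ℝ 1 g) (G : ℝ → ℝ)
    (hG : ∀ x : ℝ, G x = ∫ τ in (0 : ℝ)..x, g τ)
    (a b : ℝ) (ha : a < 0) (hb : 0 < b) (hGnn : ∀ x ∈ Set.Ioo a b, 0 ≤ G x)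
    (u : ℝ → ℝ → ℂ)
    (hu : ∀ x₁ x₂ : ℝ, u x₁ x₂ = ∫ ξ in Set.Ioi (0 : ℝ),
      Complex.exp (Complex.I * (x₂ : ℂ) * (ξ : ℂ)) * Complex.exp (-(G x₁ : ℂ) * (ξ : ℂ))
        / (1 + (ξ : ℂ) ^ 4)) :
    -- u is continuous on I × ℝ
    ContinuousOn (fun p : ℝ × ℝ => u p.1 p.2) (Set.Ioo a b ×ˢ Set.univ) ∧
    -- the relevant first and second partial derivatives exist on I × ℝ
    (∀ x₁ ∈ Set.Ioo a b, ∀ x₂ : ℝ,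
      DifferentiableAt ℝ (fun s => u s x₂) x₁ ∧
      DifferentiableAt ℝ (deriv fun s => u s x₂) x₁ ∧
      DifferentiableAt ℝ (u x₁) x₂ ∧
      DifferentiableAt ℝ (deriv (u x₁)) x₂) ∧
    -- ∂²u/∂x₁², ∂²u/∂x₂² and ∂u/∂x₂ are continuous on I × ℝ
    ContinuousOn (fun p : ℝ × ℝ => deriv (deriv fun s => u s p.2) p.1)
      (Set.Ioo a b ×ˢ Set.univ) ∧
    ContinuousOn (fun p : ℝ × ℝ => deriv (deriv (u p.1)) p.2) (Set.Ioo a b ×ˢ Set.univ) ∧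
    ContinuousOn (fun p : ℝ × ℝ => deriv (u p.1) p.2) (Set.Ioo a b ×ˢ Set.univ) ∧
    -- the PDE  −∂²u/∂x₁² − g(x₁)² ∂²u/∂x₂² + i g'(x₁) ∂u/∂x₂ = 0
    (∀ x₁ ∈ Set.Ioo a b, ∀ x₂ : ℝ,
      -(deriv (deriv fun s => u s x₂) x₁) - ((g x₁ : ℂ)) ^ 2 * deriv (deriv (u x₁)) x₂
        + Complex.I * ((deriv g x₁ : ℝ) : ℂ) * deriv (u x₁) x₂ = 0) := by
  have hgc : Continuous g := hg.continuous
  have hGd : ∀ x, HasDerivAt G (g x) x := by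
    intro x
    have hfun : G = fun y => ∫ τ in (0:ℝ)..y, g τ := funext hG
    rw [hfun]
    exact intervalIntegral.integral_hasDerivAt_right (hgc.intervalIntegrable _ _)
      (hgc.stronglyMeasurableAtFilter _ _) hgc.continuousAt
  have hGc : Continuous G := by
    have hd : Differentiable ℝ G := fun x => (hGd x).differentiableAt
    exact hd.continuous
  have hu1 : ∀ x₁ x₂ : ℝ, u x₁ x₂
      = ∫ ξ in Ioi (0:ℝ), (1:ℂ) * Mk (Complex.I * x₂ - G x₁) ξ := by
    intro x₁ x₂
    rw [hu]
    refine int_congr fun ξ => ?_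
    rw [one_mul, Mk, ← Complex.exp_add]
    have e : Complex.I * x₂ * ξ + -(G x₁:ℂ) * ξ = (Complex.I * x₂ - G x₁) * ξ := by ring
    rw [e]
  have hnn1 : ∀ x₁ ∈ Ioo a b, ∀ᶠ s in nhds x₁, 0 ≤ G s := fun x₁ hx₁ =>
    (isOpen_Ioo.eventually_mem hx₁).mono fun s hs => hGnn s hs
  have hnnp : ∀ p ∈ Ioo a b ×ˢ (univ : Set ℝ), ∀ᶠ q : ℝ × ℝ in nhds p, 0 ≤ G q.1 :=
    fun p hp => (continuous_fst.tendsto p).eventually (hnn1 p.1 hp.1)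
  have du2 : ∀ x₁ ∈ Ioo a b, ∀ t : ℝ, HasDerivAt (u x₁) (Af G x₁ t) t := by
    intro x₁ hx₁ t
    have hfun : u x₁
        = fun t' : ℝ => ∫ ξ in Ioi (0:ℝ), (1:ℂ) * Mk (Complex.I * t' - G x₁) ξ :=
      funext fun t' => hu1 x₁ t'
    rw [hfun]
    exact hasDerivAt_u2 x₁ (hGnn x₁ hx₁) t
  have deriv_u2 : ∀ x₁ ∈ Ioo a b, deriv (u x₁) = Af G x₁ := fun x₁ hx₁ =>
    funext fun t => (du2 x₁ hx₁ t).deriv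
  have du1 : ∀ x₂ : ℝ, ∀ x₁ ∈ Ioo a b, HasDerivAt (fun s => u s x₂) (Cf g G x₁ x₂) x₁ := by
    intro x₂ x₁ hx₁
    have hfun : (fun s => u s x₂)
        = fun s : ℝ => ∫ ξ in Ioi (0:ℝ), (1:ℂ) * Mk (Complex.I * x₂ - G s) ξ :=
      funext fun s => hu1 s x₂
    rw [hfun]
    exact hasDerivAt_u1 hg hGd x₁ x₂ (hnn1 x₁ hx₁)
  have hde : ∀ x₂ : ℝ, ∀ x₁ ∈ Ioo a b,
      deriv (fun s => u s x₂) =ᶠ[nhds x₁] fun s => Cf g G s x₂ :=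
    fun x₂ x₁ hx₁ => (isOpen_Ioo.eventually_mem hx₁).mono fun s hs => (du1 x₂ s hs).deriv
  have dd1 : ∀ x₂ : ℝ, ∀ x₁ ∈ Ioo a b,
      deriv (deriv fun s => u s x₂) x₁ = Df g G x₁ x₂ := by
    intro x₂ x₁ hx₁
    rw [(hde x₂ x₁ hx₁).deriv_eq]
    exact (hasDerivAt_C1 hg hGd x₁ x₂ (hnn1 x₁ hx₁)).deriv
  have dd2 : ∀ x₁ ∈ Ioo a b, ∀ x₂ : ℝ, deriv (deriv (u x₁)) x₂ = Bf G x₁ x₂ := by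
    intro x₁ hx₁ x₂
    rw [deriv_u2 x₁ hx₁]
    exact (hasDerivAt_A2 x₁ (hGnn x₁ hx₁) x₂).deriv
  refine ⟨?_, ?_, ?_, ?_, ?_, ?_⟩
  · have hc : ContinuousOn (fun p : ℝ × ℝ =>
        ∫ ξ in Ioi (0:ℝ), (1:ℂ) * Mk (Complex.I * p.2 - G p.1) ξ) (Ioo a b ×ˢ univ) :=
      fun p hp => (contAt_u hGc p (hnnp p hp)).continuousWithinAt
    exact hc.congr fun p hp => hu1 p.1 p.2
  · intro x₁ hx₁ x₂
    refine ⟨(du1 x₂ x₁ hx₁).differentiableAt, ?_, (du2 x₁ hx₁ x₂).differentiableAt, ?_⟩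
    · exact ((hde x₂ x₁ hx₁).differentiableAt_iff).2
        (hasDerivAt_C1 hg hGd x₁ x₂ (hnn1 x₁ hx₁)).differentiableAt
    · rw [deriv_u2 x₁ hx₁]
      exact (hasDerivAt_A2 x₁ (hGnn x₁ hx₁) x₂).differentiableAt
  · have hc : ContinuousOn (fun p : ℝ × ℝ => Df g G p.1 p.2) (Ioo a b ×ˢ univ) :=
      fun p hp => (contAt_D hg hGc p (hnnp p hp)).continuousWithinAt
    exact hc.congr fun p hp => dd1 p.2 p.1 hp.1
  · have hc : ContinuousOn (fun p : ℝ × ℝ => Bf G p.1 p.2) (Ioo a b ×ˢ univ) :=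
      fun p hp => (contAt_B hGc p (hnnp p hp)).continuousWithinAt
    exact hc.congr fun p hp => dd2 p.1 hp.1 p.2
  · have hc : ContinuousOn (fun p : ℝ × ℝ => Af G p.1 p.2) (Ioo a b ×ˢ univ) :=
      fun p hp => (contAt_A hGc p (hnnp p hp)).continuousWithinAt
    exact hc.congr fun p hp => by rw [deriv_u2 p.1 hp.1]
  · intro x₁ hx₁ x₂
    rw [dd1 x₂ x₁ hx₁, dd2 x₁ hx₁ x₂, deriv_u2 x₁ hx₁]
    have hz : (Complex.I * x₂ - (G x₁ : ℂ)).re ≤ 0 := re_le (hGnn x₁ hx₁)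
    have hJ1 : Integrable (fun ξ : ℝ => (ξ:ℂ) * Mk (Complex.I * x₂ - G x₁) ξ)
        (volume.restrict (Ioi 0)) :=
      integrable_mul_Mk (r := 1) hz Complex.continuous_ofReal (fun ξ hξ => by
        rw [Complex.norm_real, Real.norm_eq_abs, abs_of_nonneg hξ]; nlinarith)
    have hJ2 : Integrable (fun ξ : ℝ => (ξ:ℂ)^2 * Mk (Complex.I * x₂ - G x₁) ξ)
        (volume.restrict (Ioi 0)) :=
      integrable_mul_Mk (r := 1) hz (Complex.continuous_ofReal.pow 2) (fun ξ hξ => by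
        have e : ((ξ:ℂ))^2 = ((ξ^2 : ℝ):ℂ) := by push_cast; ring
        rw [e, Complex.norm_real, Real.norm_eq_abs, abs_of_nonneg (by positivity)]; nlinarith)
    have hA : Af G x₁ x₂
        = Complex.I * ∫ ξ in Ioi (0:ℝ), (ξ:ℂ) * Mk (Complex.I * x₂ - G x₁) ξ := by
      unfold Af
      rw [← integral_const_mul]
      exact int_congr fun ξ => by ring
    have hB : Bf G x₁ x₂
        = -∫ ξ in Ioi (0:ℝ), (ξ:ℂ)^2 * Mk (Complex.I * x₂ - G x₁) ξ := by
      unfold Bf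
      rw [← integral_neg]
      exact int_congr fun ξ => by ring
    have hD : Df g G x₁ x₂
        = (g x₁ : ℂ)^2 * (∫ ξ in Ioi (0:ℝ), (ξ:ℂ)^2 * Mk (Complex.I * x₂ - G x₁) ξ)
          - ((deriv g x₁ : ℝ) : ℂ) * ∫ ξ in Ioi (0:ℝ), (ξ:ℂ) * Mk (Complex.I * x₂ - G x₁) ξ := by
      unfold Df
      rw [← integral_const_mul, ← integral_const_mul,
        ← integral_sub (hJ2.const_mul _) (hJ1.const_mul _)]
      exact int_congr fun ξ => by ring
    rw [hA, hB, hD]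
    linear_combination ((deriv g x₁ : ℝ) : ℂ)
      * (∫ ξ in Ioi (0:ℝ), (ξ:ℂ) * Mk (Complex.I * x₂ - G x₁) ξ) * Complex.I_mul_I
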